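/- Let β ≤ 0 and Δt > 0. Suppose real numbers T_i^n, T_e^n, T_i^⋆, T_e^⋆ satisfy the implicit source step T_i^⋆ − T_i^n = Δtβ(T_i^⋆ − T_e^⋆) and T_e^⋆ − T_e^n = −Δtβ(T_i^⋆ − T_e^⋆). Then (T_i^⋆)² + (T_e^⋆)² ≤ (T_i^n)² + (T_e^n)². -/
import Mathlib

/-- Pointwise L²-decrease of the implicit discretization of the
temperature-exchange source term `±β(T_i − T_e)` with `β ≤ 0`. -/
theorem implicit_source_step_L2_decrease
    (β Δt : ℝ) (hβ : β ≤ 0) (hΔt : 0 < Δt)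
    (Tin Ten Tis Tes : ℝ)
    (hi : Tis - Tin = Δt * β * (Tis - Tes))
    (he : Tes - Ten = -(Δt * β * (Tis - Tes))) :
    Tis^2 + Tes^2 ≤ Tin^2 + Ten^2 := by
  have hTin : Tin = Tis - Δt * β * (Tis - Tes) := by linarith
  have hTen : Ten = Tes + Δt * β * (Tis - Tes) := by linarith
  have h1 : Δt * β * (Tis - Tes)^2 ≤ 0 :=
    mul_nonpos_of_nonpos_of_nonneg
      (mul_nonpos_of_nonneg_of_nonpos hΔt.le hβ) (sq_nonneg _)
  subst hTin hTen
  nlinarith [h1, sq_nonneg (Δt * β * (Tis - Tes))]
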